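/- arXiv:1409.2457 — 2 statements merged into one kernel-verified Lean document; each statement's English description precedes it below -/
import Mathlib

section
/- (Completeness of the reduction for weighted CPS-3F.) With the same construction as in the soundness direction (a_{2i-1} = (i,1) with weight s_i, a_{2i} = (i+0.2, 1) with weight 0, b_{2i-1} = (i, 0) with weight 0, b_{2i} = (i+0.2, 0) with weight s_i), if there exist subsequences A' of A and B' of B with C(A') ≤ 𝔖/2, C(B') ≤ 𝔖/2, d_dF(A,A') ≤ 0.2, d_dF(B,B') ≤ 0.2, and d_dF(A',B') ≤ 1, then {s_1,...,s_n} can be partitioned into two sets each summing to 𝔖/2. -/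
/-- One step of a monotone coupling on 0-based index pairs:
each index advances by 0 or 1, and at least one advances. -/
def StepN (p q : ℕ × ℕ) : Prop :=
  p.1 ≤ q.1 ∧ q.1 ≤ p.1 + 1 ∧ p.2 ≤ q.2 ∧ q.2 ≤ p.2 + 1 ∧ p ≠ q

/-- A coupling of sequences of lengths `la` and `lb`: starts at `(0,0)`,
ends at `(la-1, lb-1)`, and advances by `StepN`. -/
def IsCouplingL (la lb : ℕ) (c : List (ℕ × ℕ)) : Prop :=
  c.head? = some (0, 0) ∧ c.getLast? = some (la - 1, lb - 1) ∧ c.Chain' StepN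

/-- The maximal pointwise distance along a coupling. -/
noncomputable def costL {X : Type*} [MetricSpace X] [Inhabited X]
    (P Q : List X) (c : List (ℕ × ℕ)) : ℝ :=
  (c.map (fun p => dist (P.getD p.1 default) (Q.getD p.2 default))).foldr max 0

/-- The discrete Fréchet distance of two finite sequences (lists) of points. -/
noncomputable def dFL {X : Type*} [MetricSpace X] [Inhabited X] (P Q : List X) : ℝ :=
  sInf { r | ∃ c, IsCouplingL P.length Q.length c ∧ costL P Q c = r }

abbrev Pt := EuclideanSpace ℝ (Fin 2)

noncomputable def pt (x y : ℝ) : Pt := WithLp.toLp 2 ![x, y]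

/-- The weighted chain `A`: `a_{2i-1} = (i,1)` with weight `s_i`,
`a_{2i} = (i+0.2,1)` with weight `0` (here `i` runs 0-based). -/
noncomputable def chainA (n : ℕ) (s : Fin n → ℕ) : List (Pt × ℕ) :=
  (List.finRange n).flatMap
    (fun (i : Fin n) => [(pt ((i : ℝ) + 1) 1, s i), (pt ((i : ℝ) + 1 + 0.2) 1, 0)])

/-- The weighted chain `B`: `b_{2i-1} = (i,0)` with weight `0`,
`b_{2i} = (i+0.2,0)` with weight `s_i`. -/
noncomputable def chainB (n : ℕ) (s : Fin n → ℕ) : List (Pt × ℕ) :=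
  (List.finRange n).flatMap
    (fun (i : Fin n) => [(pt ((i : ℝ) + 1) 0, 0), (pt ((i : ℝ) + 1 + 0.2) 0, s i)])

/-- Total weight of a weighted chain. -/
def wt (L : List (Pt × ℕ)) : ℕ := (L.map Prod.snd).sum

/- ## Auxiliary lemmas -/

lemma foldr_max_le {l : List ℝ} {a : ℝ} (h : a ∈ l) : a ≤ l.foldr max 0 := by
  induction l with
  | nil => simp at h
  | cons b t ih =>
    rcases List.mem_cons.1 h with rfl | h
    · exact le_max_left _ _
    · exact le_trans (ih h) (le_max_right _ _)

lemma exists_coupling (la lb : ℕ) (ha : 1 ≤ la) (hb : 1 ≤ lb) :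
    ∃ c, IsCouplingL la lb c := by
  refine ⟨(List.range (max la lb)).map fun k => (min k (la-1), min k (lb-1)), ?_, ?_, ?_⟩
  · obtain ⟨t, ht⟩ : ∃ t, max la lb = t + 1 := ⟨max la lb - 1, by omega⟩
    rw [ht, List.range_succ_eq_map]
    rw [List.map_cons, List.head?_cons]
    simp
  · obtain ⟨t, ht⟩ : ∃ t, max la lb = t + 1 := ⟨max la lb - 1, by omega⟩
    rw [ht, List.getLast?_map, List.getLast?_range, if_neg (by omega)]
    simp only [Option.map_some, Nat.add_sub_cancel]
    have h1 : min t (la-1) = la - 1 := by omega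
    have h2 : min t (lb-1) = lb - 1 := by omega
    rw [h1, h2]
  · rw [List.Chain', List.isChain_map]
    obtain ⟨t, ht⟩ : ∃ t, max la lb = t + 1 := ⟨max la lb - 1, by omega⟩
    rw [ht, List.isChain_range_succ]
    intro m hm
    refine ⟨by omega, by omega, by omega, by omega, ?_⟩
    simp only [ne_eq, Prod.mk.injEq, not_and]
    omega

lemma coverage (c : List (ℕ×ℕ)) (hc : c.Chain' StepN) :
    ∀ p q : ℕ × ℕ, c.head? = some p → c.getLast? = some q →
    ∀ k, p.1 ≤ k → k ≤ q.1 → ∃ r ∈ c, r.1 = k := by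
  induction c with
  | nil => intro p q hp; simp at hp
  | cons a t ih =>
    intro p q hp hq k hk1 hk2
    simp only [List.head?_cons, Option.some.injEq] at hp
    subst hp
    cases t with
    | nil =>
      simp only [List.getLast?_singleton, Option.some.injEq] at hq
      subst hq
      exact ⟨a, by simp, by omega⟩
    | cons b t' =>
      have hstep : StepN a b := (List.isChain_cons_cons.1 hc).1
      have hc' : (b :: t').Chain' StepN := (List.isChain_cons_cons.1 hc).2
      rw [List.getLast?_cons_cons] at hq
      rcases eq_or_lt_of_le hk1 with h | h
      · exact ⟨a, by simp, h⟩
      · have hb : b.1 ≤ k := by have := hstep.2.1; omega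
        obtain ⟨r, hr, hrk⟩ := ih hc' b q rfl hq k hb hk2
        exact ⟨r, List.mem_cons_of_mem _ hr, hrk⟩

lemma match_lemma {X : Type*} [MetricSpace X] [Inhabited X] (P Q : List X)
    (c : List (ℕ×ℕ)) (hc : IsCouplingL P.length Q.length c) {x : X} (hx : x ∈ P) :
    ∃ y, (y ∈ Q ∨ y = default) ∧ dist x y ≤ costL P Q c := by
  obtain ⟨k, hk, hkx⟩ := List.mem_iff_getElem.1 hx
  obtain ⟨r, hr, hrk⟩ := coverage c hc.2.2 _ _ hc.1 hc.2.1 k (by omega)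
    (by simp only; omega)
  refine ⟨Q.getD r.2 default, ?_, ?_⟩
  · by_cases hq : r.2 < Q.length
    · left; rw [List.getD_eq_getElem _ _ hq]; exact List.getElem_mem _
    · right; exact List.getD_eq_default _ _ (by omega)
  · have : dist (P.getD r.1 default) (Q.getD r.2 default) ≤ costL P Q c :=
      foldr_max_le (List.mem_map_of_mem hr)
    rwa [hrk, List.getD_eq_getElem _ _ hk, hkx] at this

lemma exists_coupling_cost {X : Type*} [MetricSpace X] [Inhabited X]
    (P Q : List X) (hP : P ≠ []) (hQ : Q ≠ []) {r : ℝ} (h : dFL P Q ≤ r) :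
    ∃ c, IsCouplingL P.length Q.length c ∧ costL P Q c < r + 0.01 := by
  have hne : { t : ℝ | ∃ c, IsCouplingL P.length Q.length c ∧ costL P Q c = t }.Nonempty := by
    obtain ⟨c, hc⟩ := exists_coupling P.length Q.length
      (List.length_pos_iff.2 hP) (List.length_pos_iff.2 hQ)
    exact ⟨costL P Q c, c, hc, rfl⟩
  obtain ⟨a, ⟨c, hc, hca⟩, hlt⟩ := Real.lt_sInf_add_pos hne (ε := 0.01) (by norm_num)
  exact ⟨c, hc, by rw [hca]; calc a < _ + 0.01 := hlt
                                  _ ≤ r + 0.01 := by unfold dFL at h; linarith⟩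

/- ## Geometry -/

lemma dist_pt (a b c d : ℝ) : dist (pt a b) (pt c d) = Real.sqrt ((a-c)^2+(b-d)^2) := by
  rw [EuclideanSpace.dist_eq]
  simp [pt, Fin.sum_univ_two, Real.dist_eq, sq_abs]

lemma dist_pt_default (a b : ℝ) : dist (pt a b) (default : Pt) = Real.sqrt (a^2+b^2) := by
  have : (default : Pt) = pt 0 0 := by
    ext i; fin_cases i <;> rfl
  rw [this, dist_pt]; norm_num

lemma pt_x (a b : ℝ) : (pt a b) 0 = a := by simp [pt]
lemma pt_y (a b : ℝ) : (pt a b) 1 = b := by simp [pt]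

lemma pt_inj {a b c d : ℝ} (h : pt a b = pt c d) : a = c ∧ b = d :=
  ⟨by rw [← pt_x a b, ← pt_x c d, h], by rw [← pt_y a b, ← pt_y c d, h]⟩

lemma nat_eq_of_sq (i j : ℕ) (h : ((i:ℝ) - j)^2 < 1) : i = j := by
  rcases lt_trichotomy i j with hij | hij | hij
  · have : (i:ℝ) + 1 ≤ j := by exact_mod_cast hij
    nlinarith
  · exact hij
  · have : (j:ℝ) + 1 ≤ i := by exact_mod_cast hij
    nlinarith

lemma nat_eq_of_sq' (i j : ℕ) (h : ((i:ℝ) - j - 0.2)^2 < 0.05) : i = j := by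
  rcases lt_trichotomy i j with hij | hij | hij
  · have : (i:ℝ) + 1 ≤ j := by exact_mod_cast hij
    nlinarith
  · exact hij
  · have : (j:ℝ) + 1 ≤ i := by exact_mod_cast hij
    nlinarith

lemma nat_ne_of_sq (i j : ℕ) (h : ((i:ℝ) - j + 0.2)^2 < 0.04) : False := by
  rcases lt_trichotomy i j with hij | hij | hij
  · have : (i:ℝ) + 1 ≤ j := by exact_mod_cast hij
    nlinarith
  · subst hij; nlinarith
  · have : (j:ℝ) + 1 ≤ i := by exact_mod_cast hij
    nlinarith

/- ## Chain structure -/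

lemma mem_chainA {n : ℕ} {s : Fin n → ℕ} {x : Pt × ℕ} (hx : x ∈ chainA n s) :
    ∃ i : Fin n, x = (pt ((i:ℝ)+1) 1, s i) ∨ x = (pt ((i:ℝ)+1+0.2) 1, 0) := by
  rw [chainA, List.mem_flatMap] at hx
  obtain ⟨i, _, hi⟩ := hx
  simp only [List.mem_cons, List.mem_singleton, List.not_mem_nil, or_false] at hi
  exact ⟨i, hi⟩

lemma mem_chainB {n : ℕ} {s : Fin n → ℕ} {x : Pt × ℕ} (hx : x ∈ chainB n s) :
    ∃ i : Fin n, x = (pt ((i:ℝ)+1) 0, 0) ∨ x = (pt ((i:ℝ)+1+0.2) 0, s i) := by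
  rw [chainB, List.mem_flatMap] at hx
  obtain ⟨i, _, hi⟩ := hx
  simp only [List.mem_cons, List.mem_singleton, List.not_mem_nil, or_false] at hi
  exact ⟨i, hi⟩

lemma chainA_mem1 {n : ℕ} (s : Fin n → ℕ) (i : Fin n) :
    (pt ((i:ℝ)+1) 1, s i) ∈ chainA n s := by
  rw [chainA, List.mem_flatMap]
  exact ⟨i, List.mem_finRange i, by simp⟩

lemma chainB_mem1 {n : ℕ} (s : Fin n → ℕ) (i : Fin n) :
    (pt ((i:ℝ)+1) 0, 0) ∈ chainB n s := by
  rw [chainB, List.mem_flatMap]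
  exact ⟨i, List.mem_finRange i, by simp⟩

lemma nodup_chainA {n : ℕ} (s : Fin n → ℕ) : (chainA n s).Nodup := by
  have hp : (chainA n s).Pairwise (fun x y => x.1 0 < y.1 0) := by
    rw [chainA, List.pairwise_flatMap]
    constructor
    · intro a _
      refine List.pairwise_pair.mpr ?_
      simp only [pt_x]
      norm_num
    · refine (List.pairwise_lt_finRange n).imp_of_mem ?_
      intro a b _ _ hab x hx y hy
      simp only [List.mem_cons, List.mem_singleton, List.not_mem_nil, or_false] at hx hy
      have hab' : ((a:ℕ):ℝ) + 1 ≤ ((b:ℕ):ℝ) := by exact_mod_cast hab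
      rcases hx with rfl | rfl <;> rcases hy with rfl | rfl <;> simp only [pt_x] <;> nlinarith
  exact hp.imp (fun {a b} h he => absurd h (by rw [he]; exact lt_irrefl _))

lemma nodup_chainB {n : ℕ} (s : Fin n → ℕ) : (chainB n s).Nodup := by
  have hp : (chainB n s).Pairwise (fun x y => x.1 0 < y.1 0) := by
    rw [chainB, List.pairwise_flatMap]
    constructor
    · intro a _
      refine List.pairwise_pair.mpr ?_
      simp only [pt_x]
      norm_num
    · refine (List.pairwise_lt_finRange n).imp_of_mem ?_
      intro a b _ _ hab x hx y hy
      simp only [List.mem_cons, List.mem_singleton, List.not_mem_nil, or_false] at hx hy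
      have hab' : ((a:ℕ):ℝ) + 1 ≤ ((b:ℕ):ℝ) := by exact_mod_cast hab
      rcases hx with rfl | rfl <;> rcases hy with rfl | rfl <;> simp only [pt_x] <;> nlinarith
  exact hp.imp (fun {a b} h he => absurd h (by rw [he]; exact lt_irrefl _))

lemma sum_le_wt {n : ℕ} (L : List (Pt × ℕ)) (hnd : L.Nodup) (T : Finset (Fin n))
    (φ : Fin n → Pt × ℕ) (hφ : Function.Injective φ) (hmem : ∀ i ∈ T, φ i ∈ L) :
    ∑ i ∈ T, (φ i).2 ≤ wt L := by
  classical
  rw [wt, ← List.sum_toFinset _ hnd]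
  rw [← Finset.sum_image (f := Prod.snd) (g := φ) (fun x _ y _ h => hφ h)]
  refine Finset.sum_le_sum_of_subset ?_
  intro x hx
  obtain ⟨i, hi, rfl⟩ := Finset.mem_image.1 hx
  exact List.mem_toFinset.2 (hmem i hi)

set_option maxHeartbeats 2000000 in
/-- Completeness of the reduction: if suitable simplifications `A'`, `B'` exist,
then the set partitions into two halves of equal sum. -/
theorem wcps_reduction_complete (n : ℕ) (s : Fin n → ℕ) (hs : ∀ i, 0 < s i)
    (h : ℕ) (hT : ∑ i, s i = 2 * h)
    (A' B' : List (Pt × ℕ))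
    (hA' : A'.Sublist (chainA n s)) (hB' : B'.Sublist (chainB n s))
    (hAne : A' ≠ []) (hBne : B' ≠ [])
    (hwA : wt A' ≤ h) (hwB : wt B' ≤ h)
    (hd1 : dFL ((chainA n s).map Prod.fst) (A'.map Prod.fst) ≤ 0.2)
    (hd2 : dFL ((chainB n s).map Prod.fst) (B'.map Prod.fst) ≤ 0.2)
    (hd3 : dFL (A'.map Prod.fst) (B'.map Prod.fst) ≤ 1) :
    ∃ SA : Finset (Fin n), ∑ i ∈ SA, s i = h ∧ ∑ i ∈ SAᶜ, s i = h := by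
  classical
  rcases Nat.eq_zero_or_pos n with hn | hn
  · subst hn
    have h0 : h = 0 := by simpa using hT.symm
    exact ⟨∅, by simp [h0], by simp [h0]⟩
  -- nonemptiness
  have hAne2 : chainA n s ≠ [] := fun he => by
    have := chainA_mem1 s ⟨0, hn⟩; rw [he] at this; simp at this
  have hBne2 : chainB n s ≠ [] := fun he => by
    have := chainB_mem1 s ⟨0, hn⟩; rw [he] at this; simp at this
  obtain ⟨c1, hc1, hcost1⟩ := exists_coupling_cost _ _
    (by simpa using hAne2) (by simpa using hAne) hd1
  obtain ⟨c3, hc3, hcost3⟩ := exists_coupling_cost _ _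
    (by simpa using hAne) (by simpa using hBne) hd3
  set TA : Finset (Fin n) := Finset.univ.filter
    (fun i => (pt ((i:ℝ)+1) 1, s i) ∈ A') with hTA
  set TB : Finset (Fin n) := Finset.univ.filter
    (fun i => (pt ((i:ℝ)+1+0.2) 0, s i) ∈ B') with hTB
  -- membership extraction
  have memA : ∀ i : Fin n, pt ((i:ℝ)+1) 1 ∈ A'.map Prod.fst → i ∈ TA := by
    intro i hi
    obtain ⟨⟨p, w⟩, hpw, hp⟩ := List.mem_map.1 hi
    obtain ⟨j, hj | hj⟩ := mem_chainA (hA'.subset hpw)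
    · rw [hj] at hp hpw
      simp only at hp
      obtain ⟨h1, -⟩ := pt_inj hp
      have hij : i = j := by
        refine Fin.ext (nat_eq_of_sq _ _ ?_)
        have : ((j:ℕ):ℝ) = ((i:ℕ):ℝ) := by linarith
        rw [this]; norm_num
      rw [hTA, Finset.mem_filter]
      exact ⟨Finset.mem_univ _, by rw [hij]; exact hpw⟩
    · rw [hj] at hp
      simp only at hp
      obtain ⟨h1, -⟩ := pt_inj hp
      exfalso
      refine nat_ne_of_sq (j:ℕ) (i:ℕ) ?_
      have he : ((j:ℕ):ℝ) - ((i:ℕ):ℝ) + 0.2 = 0 := by linarith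
      rw [he]; norm_num
  have memB : ∀ i : Fin n, pt ((i:ℝ)+1+0.2) 0 ∈ B'.map Prod.fst → i ∈ TB := by
    intro i hi
    obtain ⟨⟨p, w⟩, hpw, hp⟩ := List.mem_map.1 hi
    obtain ⟨j, hj | hj⟩ := mem_chainB (hB'.subset hpw)
    · rw [hj] at hp
      simp only at hp
      obtain ⟨h1, -⟩ := pt_inj hp
      exfalso
      refine nat_ne_of_sq (i:ℕ) (j:ℕ) ?_
      have he : ((i:ℕ):ℝ) - ((j:ℕ):ℝ) + 0.2 = 0 := by linarith
      rw [he]; norm_num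
    · rw [hj] at hp hpw
      simp only at hp
      obtain ⟨h1, -⟩ := pt_inj hp
      have hij : i = j := by
        refine Fin.ext (nat_eq_of_sq _ _ ?_)
        have : ((i:ℕ):ℝ) = ((j:ℕ):ℝ) := by linarith
        rw [this]; norm_num
      rw [hTB, Finset.mem_filter]
      exact ⟨Finset.mem_univ _, by rw [hij]; exact hpw⟩
  -- key covering property
  have key : ∀ i : Fin n, i ∈ TA ∪ TB := by
    intro i
    have h1 : pt ((i:ℝ)+1) 1 ∈ (chainA n s).map Prod.fst :=
      List.mem_map_of_mem (chainA_mem1 s i)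
    obtain ⟨y, hy, hyd⟩ := match_lemma _ _ c1 hc1 h1
    have hyd' : dist (pt ((i:ℝ)+1) 1) y < 0.21 := by
      calc dist (pt ((i:ℝ)+1) 1) y ≤ _ := hyd
        _ < 0.2 + 0.01 := hcost1
        _ = 0.21 := by norm_num
    rcases hy with hy | rfl
    swap
    · exfalso
      rw [dist_pt_default] at hyd'
      have := (Real.sqrt_lt' (by norm_num : (0:ℝ) < 0.21)).1 hyd'
      nlinarith [sq_nonneg ((i:ℝ)+1)]
    -- y is a point of A', hence of chainA
    have hyA : y ∈ (chainA n s).map Prod.fst := (hA'.map Prod.fst).subset hy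
    obtain ⟨⟨p, w⟩, hpw, hp⟩ := List.mem_map.1 hyA
    obtain ⟨j, hj | hj⟩ := mem_chainA hpw
    · -- y = pt (j+1) 1 : forces j = i, so i ∈ TA
      rw [hj] at hp
      simp only at hp
      rw [← hp] at hy hyd'
      rw [dist_pt] at hyd'
      have hsq := (Real.sqrt_lt' (by norm_num : (0:ℝ) < 0.21)).1 hyd'
      have hij : (i:ℕ) = (j:ℕ) := nat_eq_of_sq _ _ (by nlinarith)
      have : i = j := Fin.ext hij
      subst this
      exact Finset.mem_union_left _ (memA i hy)
    · -- y = pt (j+1.2) 1 : forces j = i, so pt (i+1.2) 1 ∈ A'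
      rw [hj] at hp
      simp only at hp
      rw [← hp] at hy hyd'
      rw [dist_pt] at hyd'
      have hsq := (Real.sqrt_lt' (by norm_num : (0:ℝ) < 0.21)).1 hyd'
      have hij : (i:ℕ) = (j:ℕ) := nat_eq_of_sq' _ _ (by nlinarith)
      have hij' : i = j := Fin.ext hij
      subst hij'
      -- now match pt (i+1.2) 1 into B'
      obtain ⟨z, hz, hzd⟩ := match_lemma _ _ c3 hc3 hy
      have hzd' : dist (pt ((i:ℝ)+1+0.2) 1) z < 1.01 := by
        calc dist (pt ((i:ℝ)+1+0.2) 1) z ≤ _ := hzd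
          _ < 1 + 0.01 := hcost3
          _ = 1.01 := by norm_num
      rcases hz with hz | rfl
      swap
      · exfalso
        rw [dist_pt_default] at hzd'
        have := (Real.sqrt_lt' (by norm_num : (0:ℝ) < 1.01)).1 hzd'
        have h0 : (0:ℝ) ≤ (i:ℕ) := Nat.cast_nonneg _
        nlinarith
      have hzB : z ∈ (chainB n s).map Prod.fst := (hB'.map Prod.fst).subset hz
      obtain ⟨⟨p', w'⟩, hpw', hp'⟩ := List.mem_map.1 hzB
      obtain ⟨j', hj' | hj'⟩ := mem_chainB hpw'
      · exfalso
        rw [hj'] at hp'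
        simp only at hp'
        rw [← hp'] at hzd'
        rw [dist_pt] at hzd'
        have hsq' := (Real.sqrt_lt' (by norm_num : (0:ℝ) < 1.01)).1 hzd'
        exact nat_ne_of_sq (i:ℕ) (j':ℕ) (by nlinarith)
      · rw [hj'] at hp'
        simp only at hp'
        rw [← hp'] at hz hzd'
        rw [dist_pt] at hzd'
        have hsq' := (Real.sqrt_lt' (by norm_num : (0:ℝ) < 1.01)).1 hzd'
        have hij2 : (i:ℕ) = (j':ℕ) := nat_eq_of_sq _ _ (by nlinarith)
        have : i = j' := Fin.ext hij2
        subst this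
        exact Finset.mem_union_right _ (memB i hz)
  -- sum bounds
  have sumA : ∑ i ∈ TA, s i ≤ wt A' := by
    have := sum_le_wt A' (hA'.nodup (nodup_chainA s)) TA
      (fun i => (pt ((i:ℝ)+1) 1, s i))
      (fun a b hab => by
        obtain ⟨h1, -⟩ := pt_inj (congrArg Prod.fst hab :)
        exact Fin.ext (by exact_mod_cast (by linarith : ((a:ℕ):ℝ) = ((b:ℕ):ℝ))))
      (fun i hi => (Finset.mem_filter.1 hi).2)
    simpa using this
  have sumB : ∑ i ∈ TB, s i ≤ wt B' := by
    have := sum_le_wt B' (hB'.nodup (nodup_chainB s)) TB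
      (fun i => (pt ((i:ℝ)+1+0.2) 0, s i))
      (fun a b hab => by
        obtain ⟨h1, -⟩ := pt_inj (congrArg Prod.fst hab :)
        exact Fin.ext (by exact_mod_cast (by linarith : ((a:ℕ):ℝ) = ((b:ℕ):ℝ))))
      (fun i hi => (Finset.mem_filter.1 hi).2)
    simpa using this
  -- conclusion
  have hUnion : TA ∪ TB = Finset.univ := Finset.eq_univ_iff_forall.2 key
  have hsum : ∑ i ∈ TA, s i + ∑ i ∈ TB, s i ≥ 2 * h := by
    have := Finset.sum_union_inter (s₁ := TA) (s₂ := TB) (f := s)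
    rw [hUnion] at this
    omega
  have hTAh : ∑ i ∈ TA, s i = h := by omega
  refine ⟨TA, hTAh, ?_⟩
  have := Finset.sum_compl_add_sum TA s
  omega
end

section
/- (Correctness of the dynamic program for minimum-length one-sided simplification.) Let A = (a_1,...,a_m), B = (b_1,...,b_n) be chains in a metric space and δ > 0. For 1 ≤ i ≤ m and 1 ≤ j ≤ n, define O[i,j] as the minimum length of a subsequence A^i of A[i..m] beginning at a_i such that d_dF(A^i, B[j..n]) ≤ δ (∞ if none exists), and X[i,j] = min_{i' ≥ i} O[i',j]. Then: (1) O[i,j] = ∞ whenever d(a_i, b_j) > δ; (2) if d(a_i, b_j) ≤ δ and i < m and j < n, then O[i,j] = min( O[i,j+1], X[i+1,j+1] + 1 ); (3) X[i,j] = min( X[i+1,j], O[i,j] ) with X[m+1,j] = ∞. -/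
/-- `OVal A B δ i j` (1-based `i`, `j`): the minimum length of a subsequence of
the suffix `A[i..m]` beginning at `a_i` whose discrete Fréchet distance to the
suffix `B[j..n]` is at most `δ` (and `⊤` if none exists). -/
noncomputable def OVal {X : Type*} [MetricSpace X] [Inhabited X]
    (A B : List X) (δ : ℝ) (i j : ℕ) : ℕ∞ :=
  sInf {z : ℕ∞ | ∃ S : List X,
    S.Sublist (A.drop (i - 1)) ∧ S ≠ [] ∧ S.head? = (A.drop (i - 1)).head? ∧
    dFL S (B.drop (j - 1)) ≤ δ ∧ z = (S.length : ℕ∞)}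

/-- `XVal A B δ i j = min_{i' ≥ i} OVal A B δ i' j` (with `i'` ranging over
`i, ..., m`). -/
noncomputable def XVal {X : Type*} [MetricSpace X] [Inhabited X]
    (A B : List X) (δ : ℝ) (i j : ℕ) : ℕ∞ :=
  (Finset.Icc i A.length).inf (fun i' => OVal A B δ i' j)

namespace DPaux

lemma mem_of_getLast? {α : Type*} {l : List α} {a : α} (h : l.getLast? = some a) : a ∈ l := by
  cases l with
  | nil => simp at h
  | cons x t =>
    rw [List.getLast?_eq_getLast (by simp)] at h
    cases h; exact List.getLast_mem _

lemma getD_drop {X : Type*} [Inhabited X] (l : List X) (n k : ℕ) :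
    (l.drop n).getD k default = l.getD (n + k) default := by
  simp [List.getD_eq_getElem?_getD, List.getElem?_drop]

lemma foldr_max_nonneg (l : List ℝ) : 0 ≤ l.foldr max 0 := by
  induction l with
  | nil => simp
  | cons a t ih => exact le_trans ih (le_max_right _ _)

lemma le_foldr_max {l : List ℝ} {x : ℝ} (h : x ∈ l) : x ≤ l.foldr max 0 := by
  induction l with
  | nil => simp at h
  | cons a t ih =>
    rcases List.mem_cons.1 h with rfl | h
    · exact le_max_left _ _
    · exact le_trans (ih h) (le_max_right _ _)

lemma foldr_max_mem (l : List ℝ) : l.foldr max 0 = 0 ∨ l.foldr max 0 ∈ l := by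
  induction l with
  | nil => simp
  | cons a t ih =>
    rcases le_total a (t.foldr max 0) with h | h
    · rcases ih with h0 | hm
      · left; rw [List.foldr_cons, h0]; exact max_eq_right (h0 ▸ h)
      · right; exact List.mem_cons.2 (Or.inr (by rw [List.foldr_cons, max_eq_right h]; exact hm))
    · right; exact List.mem_cons.2 (Or.inl (by rw [List.foldr_cons, max_eq_left h]))

lemma costL_nonneg {X : Type*} [MetricSpace X] [Inhabited X]
    (P Q : List X) (c : List (ℕ × ℕ)) : 0 ≤ costL P Q c := foldr_max_nonneg _

lemma dist_le_costL {X : Type*} [MetricSpace X] [Inhabited X]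
    (P Q : List X) {c : List (ℕ × ℕ)} {p : ℕ × ℕ} (h : p ∈ c) :
    dist (P.getD p.1 default) (Q.getD p.2 default) ≤ costL P Q c :=
  le_foldr_max (List.mem_map_of_mem h)

lemma costL_cons {X : Type*} [MetricSpace X] [Inhabited X]
    (P Q : List X) (p : ℕ × ℕ) (c : List (ℕ × ℕ)) :
    costL P Q (p :: c) = max (dist (P.getD p.1 default) (Q.getD p.2 default)) (costL P Q c) := rfl

lemma costL_map_eq {X : Type*} [MetricSpace X] [Inhabited X]
    {P Q P' Q' : List X} {c : List (ℕ × ℕ)} {f : ℕ × ℕ → ℕ × ℕ}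
    (h : ∀ p ∈ c, dist (P'.getD (f p).1 default) (Q'.getD (f p).2 default)
      = dist (P.getD p.1 default) (Q.getD p.2 default)) :
    costL P' Q' (c.map f) = costL P Q c := by
  unfold costL
  rw [List.map_map]
  exact congrArg (fun l => List.foldr max 0 l) (List.map_congr_left h)

end DPaux

namespace DPaux

lemma stepN_add {p q : ℕ × ℕ} (s t : ℕ) (h : StepN p q) :
    StepN (p.1 + s, p.2 + t) (q.1 + s, q.2 + t) := by
  obtain ⟨h1, h2, h3, h4, h5⟩ := h
  refine ⟨by omega, by omega, by omega, by omega, ?_⟩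
  intro he
  apply h5
  have e1 : p.1 + s = q.1 + s := congrArg Prod.fst he
  have e2 : p.2 + t = q.2 + t := congrArg Prod.snd he
  exact Prod.ext (by omega) (by omega)

lemma stepN_sub {p q : ℕ × ℕ} (s t : ℕ) (hs : s ≤ p.1) (ht : t ≤ p.2) (h : StepN p q) :
    StepN (p.1 - s, p.2 - t) (q.1 - s, q.2 - t) := by
  obtain ⟨h1, h2, h3, h4, h5⟩ := h
  refine ⟨by omega, by omega, by omega, by omega, ?_⟩
  intro he
  apply h5
  have e1 : p.1 - s = q.1 - s := congrArg Prod.fst he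
  have e2 : p.2 - t = q.2 - t := congrArg Prod.snd he
  exact Prod.ext (by omega) (by omega)

/-- along a chain, the head is a componentwise lower bound (including itself) -/
lemma chain'_le {l : List (ℕ × ℕ)} {p : ℕ × ℕ} (h : List.Chain' StepN (p :: l)) :
    ∀ q ∈ p :: l, p.1 ≤ q.1 ∧ p.2 ≤ q.2 := by
  induction l generalizing p with
  | nil => intro q hq; rcases List.mem_singleton.1 hq with rfl; exact ⟨le_rfl, le_rfl⟩
  | cons b m ih =>
    intro q hq
    rw [List.Chain', List.isChain_cons_cons] at h
    rcases List.mem_cons.1 hq with rfl | hq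
    · exact ⟨le_rfl, le_rfl⟩
    · have hb := ih h.2 q hq
      exact ⟨le_trans h.1.1 hb.1, le_trans h.1.2.2.1 hb.2⟩

lemma chain'_map_add {c : List (ℕ × ℕ)} (s t : ℕ) (h : List.Chain' StepN c) :
    List.Chain' StepN (c.map (fun p => (p.1 + s, p.2 + t))) :=
  (List.isChain_map _).2 (h.imp (fun _ _ hab => stepN_add s t hab))

lemma chain'_map_sub {c : List (ℕ × ℕ)} (s t : ℕ) (h : List.Chain' StepN c)
    (hb : ∀ x ∈ c, s ≤ x.1 ∧ t ≤ x.2) :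
    List.Chain' StepN (c.map (fun p => (p.1 - s, p.2 - t))) := by
  induction c with
  | nil => simp [List.Chain']
  | cons a l ih =>
    cases l with
    | nil => simp [List.Chain']
    | cons b m =>
      rw [List.Chain', List.isChain_cons_cons] at h
      rw [List.map_cons, List.map_cons, List.Chain', List.isChain_cons_cons]
      constructor
      · exact stepN_sub s t (hb a (by simp)).1 (hb a (by simp)).2 h.1
      · exact ih h.2 (fun x hx => hb x (List.mem_cons_of_mem _ hx))

lemma exists_coupling_one (lb : ℕ) (hb : 1 ≤ lb) : ∃ c, IsCouplingL 1 lb c := by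
  induction lb with
  | zero => omega
  | succ n ih =>
    rcases Nat.eq_or_lt_of_le hb with h1 | h1
    · obtain rfl : n = 0 := by omega
      exact ⟨[(0, 0)], by simp [IsCouplingL, List.Chain']⟩
    · have hn : 1 ≤ n := by omega
      obtain ⟨c, hh, hl, hc⟩ := ih hn
      refine ⟨c ++ [(0, n)], ?_, ?_, ?_⟩
      · have : c ≠ [] := by rintro rfl; simp at hh
        rw [List.head?_append_of_ne_nil _ this]; exact hh
      · simp
      · rw [List.Chain', List.isChain_append]
        refine ⟨hc, List.isChain_singleton _, ?_⟩
        intro x hx y hy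
        rw [hl] at hx
        simp at hx hy
        subst hx; subst hy
        exact ⟨by omega, by omega, by omega, by omega, by
          intro he
          have := congrArg Prod.snd he
          simp at this; omega⟩

lemma exists_coupling (la lb : ℕ) (ha : 1 ≤ la) (hb : 1 ≤ lb) : ∃ c, IsCouplingL la lb c := by
  induction la with
  | zero => omega
  | succ n ih =>
    rcases Nat.eq_or_lt_of_le ha with h1 | h1
    · obtain ⟨c, hc⟩ := exists_coupling_one lb hb
      exact ⟨c, by rwa [← h1]⟩
    · have hn : 1 ≤ n := by omega
      obtain ⟨c, hh, hl, hc⟩ := ih hn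
      refine ⟨c ++ [(n, lb - 1)], ?_, ?_, ?_⟩
      · have : c ≠ [] := by rintro rfl; simp at hh
        rw [List.head?_append_of_ne_nil _ this]; exact hh
      · simp
      · rw [List.Chain', List.isChain_append]
        refine ⟨hc, List.isChain_singleton _, ?_⟩
        intro x hx y hy
        rw [hl] at hx
        simp at hx hy
        subst hx; subst hy
        exact ⟨by omega, by omega, by omega, by omega, by
          intro he
          have := congrArg Prod.fst he
          simp at this; omega⟩

end DPaux

namespace DPaux

lemma dFL_le_costL {X : Type*} [MetricSpace X] [Inhabited X]
    {P Q : List X} {c : List (ℕ × ℕ)} (h : IsCouplingL P.length Q.length c) :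
    dFL P Q ≤ costL P Q c := by
  apply csInf_le
  · exact ⟨0, fun r ⟨c', _, hc'⟩ => hc' ▸ costL_nonneg P Q c'⟩
  · exact ⟨c, h, rfl⟩

lemma dFL_exists {X : Type*} [MetricSpace X] [Inhabited X]
    {P Q : List X} (hP : P ≠ []) (hQ : Q ≠ []) :
    ∃ c, IsCouplingL P.length Q.length c ∧ costL P Q c = dFL P Q := by
  set s := { r | ∃ c, IsCouplingL P.length Q.length c ∧ costL P Q c = r } with hs
  have hne : s.Nonempty := by
    obtain ⟨c, hc⟩ := exists_coupling P.length Q.length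
      (List.length_pos_iff.2 hP) (List.length_pos_iff.2 hQ)
    exact ⟨costL P Q c, c, hc, rfl⟩
  have hfin : s.Finite := by
    apply Set.Finite.subset (s := insert (0:ℝ)
      (Set.image2 dist (insert default {x | x ∈ P}) (insert default {x | x ∈ Q})))
    · exact Set.Finite.insert _ (Set.Finite.image2 _
        ((P.finite_toSet).insert _) ((Q.finite_toSet).insert _))
    · rintro r ⟨c, _, rfl⟩
      rcases foldr_max_mem (c.map (fun p => dist (P.getD p.1 default) (Q.getD p.2 default)))
        with h0 | hm
      · left; exact h0
      · right
        obtain ⟨p, _, hp⟩ := List.mem_map.1 hm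
        refine ⟨P.getD p.1 default, ?_, Q.getD p.2 default, ?_, hp⟩
        · by_cases h : p.1 < P.length
          · exact Set.mem_insert_of_mem _ (by rw [List.getD_eq_getElem _ _ h]; exact List.getElem_mem h)
          · rw [List.getD_eq_default _ _ (not_lt.1 h)]; exact Set.mem_insert _ _
        · by_cases h : p.2 < Q.length
          · exact Set.mem_insert_of_mem _ (by rw [List.getD_eq_getElem _ _ h]; exact List.getElem_mem h)
          · rw [List.getD_eq_default _ _ (not_lt.1 h)]; exact Set.mem_insert _ _
  have := hne.csInf_mem hfin
  rw [hs] at this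
  obtain ⟨c, hc, hcost⟩ := this
  exact ⟨c, hc, hcost⟩

lemma enat_sInf_mem {s : Set ℕ∞} (h : s.Nonempty) : sInf s ∈ s := by
  obtain ⟨a, ha, hmin⟩ := (wellFounded_lt (α := ℕ∞)).has_min s h
  have : sInf s = a :=
    le_antisymm (sInf_le ha) (le_sInf fun b hb => not_lt.1 (hmin b hb))
  rw [this]; exact ha

lemma sublist_exists_drop {X : Type*} {T L : List X} (h : T.Sublist L) (hT : T ≠ []) :
    ∃ p, p < L.length ∧ T.Sublist (L.drop p) ∧ T.head? = (L.drop p).head? := by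
  induction h with
  | slnil => exact absurd rfl hT
  | cons a h ih =>
    obtain ⟨p, h1, h2, h3⟩ := ih hT
    exact ⟨p + 1, by simpa using h1, by rwa [List.drop_succ_cons], by rwa [List.drop_succ_cons]⟩
  | cons_cons a h ih =>
    exact ⟨0, by simp, by simpa using h.cons₂ a, rfl⟩

end DPaux

namespace DPaux

lemma peel {X : Type*} [MetricSpace X] [Inhabited X] (Q : List X) (lb : ℕ) (δ : ℝ) :
    ∀ (N : ℕ) (c : List (ℕ × ℕ)), c.length ≤ N → ∀ (P : List X) (la : ℕ),
      IsCouplingL la lb c → 2 ≤ lb → 1 ≤ la → costL P Q c ≤ δ →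
      ∃ k c', k + 1 ≤ la ∧ IsCouplingL (la - k) (lb - 1) c' ∧
        costL (P.drop k) (Q.drop 1) c' ≤ δ := by
  intro N
  induction N with
  | zero =>
    intro c hc P la hcoup _ _ _
    have : c = [] := List.length_eq_zero_iff.1 (Nat.le_zero.1 hc)
    subst this
    simp [IsCouplingL] at hcoup
  | succ N ih =>
    intro c hc P la hcoup hlb hla hcost
    obtain ⟨hh, hl, hch⟩ := hcoup
    cases c with
    | nil => simp at hh
    | cons c0 rest =>
      have hc0 : c0 = (0, 0) := by simpa using hh
      subst hc0
      cases rest with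
      | nil =>
        simp only [List.getLast?_singleton, Option.some.injEq, Prod.mk.injEq] at hl
        omega
      | cons q m =>
        have hstep : StepN (0, 0) q := (List.isChain_cons_cons.1 hch).1
        have hch2 : List.Chain' StepN (q :: m) := (List.isChain_cons_cons.1 hch).2
        have hl2 : (q :: m).getLast? = some (la - 1, lb - 1) := by
          rwa [List.getLast?_cons_cons] at hl
        have hbound := chain'_le hch2
        have hlast_mem : (la - 1, lb - 1) ∈ q :: m := mem_of_getLast? hl2
        have hq1 : q.1 ≤ la - 1 := by
          have := (hbound _ hlast_mem).1; simpa using this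
        have hrestcost : costL P Q (q :: m) ≤ δ := by
          rw [costL_cons] at hcost
          exact le_trans (le_max_right _ _) hcost
        obtain ⟨hs1, hs2, hs3, hs4, hs5⟩ := hstep
        simp only [] at hs1 hs2 hs3 hs4
        rcases Nat.lt_or_ge q.2 1 with hq2 | hq2
        · -- q = (1, 0): recurse
          have hq20 : q.2 = 0 := by omega
          have hq11 : q.1 = 1 := by
            by_contra h
            have hq10 : q.1 = 0 := by omega
            exact hs5 (Prod.ext_iff.2 ⟨hq10.symm, hq20.symm⟩)
          set c2 := (q :: m).map (fun p => (p.1 - 1, p.2)) with hc2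
          have hb2 : ∀ x ∈ q :: m, 1 ≤ x.1 ∧ 0 ≤ x.2 := fun x hx =>
            ⟨by have := (hbound x hx).1; omega, Nat.zero_le _⟩
          have hla2 : 1 ≤ la - 1 := by omega
          have hcoup2 : IsCouplingL (la - 1) lb c2 := by
            refine ⟨?_, ?_, chain'_map_sub 1 0 hch2 hb2⟩
            · rw [hc2, List.map_cons]
              simp [hq11, hq20]
            · rw [hc2, List.getLast?_map, hl2]
              simp
          have hcost2 : costL (P.drop 1) Q c2 ≤ δ := by
            refine le_trans (le_of_eq (costL_map_eq ?_)) hrestcost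
            intro p hp
            have hp1 : 1 ≤ p.1 := (hb2 p hp).1
            rw [getD_drop]
            congr 2
            · omega
          obtain ⟨k, c', h1, h2, h3⟩ := ih c2 (by
              have : c2.length = m.length + 1 := by simp [hc2]
              simp at hc
              omega) (P.drop 1) (la - 1) hcoup2 hlb hla2 hcost2
          refine ⟨k + 1, c', by omega, ?_, ?_⟩
          · rw [show la - (k + 1) = la - 1 - k from by omega]
            exact h2
          · have hd : (P.drop 1).drop k = P.drop (k + 1) := by
              rw [List.drop_drop, Nat.add_comm 1 k]
            rw [← hd]
            exact h3
        · -- q.2 = 1: peel off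
          have hq2' : q.2 = 1 := by omega
          refine ⟨q.1, (q :: m).map (fun p => (p.1 - q.1, p.2 - 1)), by omega, ?_, ?_⟩
          · refine ⟨?_, ?_, chain'_map_sub q.1 1 hch2 (fun x hx =>
              ⟨(hbound x hx).1, by have := (hbound x hx).2; omega⟩)⟩
            · rw [List.map_cons]
              simp [hq2']
            · rw [List.getLast?_map, hl2]
              simp only [Option.map_some, Option.some.injEq]
              exact Prod.ext_iff.2 ⟨by omega, by omega⟩
          · refine le_trans (le_of_eq (costL_map_eq ?_)) hrestcost
            intro p hp
            have hp1 : q.1 ≤ p.1 := (hbound p hp).1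
            have hp2 : 1 ≤ p.2 := by have := (hbound p hp).2; omega
            rw [getD_drop, getD_drop]
            congr 2
            · omega
            · omega

end DPaux

namespace DPaux

lemma getD_zero_eq {X : Type*} [Inhabited X] {S L : List X} (h : S.head? = L.head?) :
    S.getD 0 default = L.getD 0 default := by
  rw [List.getD_eq_getElem?_getD, List.getD_eq_getElem?_getD, ← List.head?_eq_getElem?, ← List.head?_eq_getElem?, h]

lemma coupling_prepend {X : Type*} [MetricSpace X] [Inhabited X]
    {P Q P' Q' : List X} {c : List (ℕ × ℕ)} {la lb la' lb' : ℕ} (s t : ℕ)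
    (hc : IsCouplingL la lb c)
    (hst : StepN (0, 0) (s, t))
    (hla' : la' - 1 = la - 1 + s) (hlb' : lb' - 1 = lb - 1 + t)
    (hP : ∀ x : ℕ, P'.getD (x + s) default = P.getD x default)
    (hQ : ∀ x : ℕ, Q'.getD (x + t) default = Q.getD x default) :
    ∃ c2, IsCouplingL la' lb' c2 ∧
      costL P' Q' c2 = max (dist (P'.getD 0 default) (Q'.getD 0 default)) (costL P Q c) := by
  obtain ⟨hh, hl, hch⟩ := hc
  have hcne : c ≠ [] := by rintro rfl; simp at hh
  obtain ⟨q, cr, rfl⟩ := List.exists_cons_of_ne_nil hcne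
  have hq : q = (0, 0) := by simpa using hh
  subst hq
  refine ⟨((0, 0) : ℕ × ℕ) :: ((0, 0) :: cr).map (fun p => (p.1 + s, p.2 + t)), ⟨?_, ?_, ?_⟩, ?_⟩
  · rfl
  · rw [List.map_cons, List.getLast?_cons_cons]
    show (List.map (fun p => (p.1 + s, p.2 + t)) ((0, 0) :: cr)).getLast? = _
    rw [List.getLast?_map, hl]
    simp only [Option.map_some, Option.some.injEq]
    exact Prod.ext_iff.2 ⟨by simpa using hla'.symm, by simpa using hlb'.symm⟩
  · rw [List.map_cons, List.Chain', List.isChain_cons_cons]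
    refine ⟨by simpa using hst, ?_⟩
    show List.Chain' StepN (List.map (fun p => (p.1 + s, p.2 + t)) ((0, 0) :: cr))
    exact chain'_map_add s t hch
  · rw [costL_cons, costL_map_eq (fun p _ => by rw [hP p.1, hQ p.2])]

end DPaux

namespace DPaux

lemma OVal_le {X : Type*} [MetricSpace X] [Inhabited X]
    {A B : List X} {δ : ℝ} {i j : ℕ} {S : List X}
    (h1 : S.Sublist (A.drop (i - 1))) (h2 : S ≠ [])
    (h3 : S.head? = (A.drop (i - 1)).head?) (h4 : dFL S (B.drop (j - 1)) ≤ δ) :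
    OVal A B δ i j ≤ (S.length : ℕ∞) :=
  sInf_le ⟨S, h1, h2, h3, h4, rfl⟩

lemma le_OVal {X : Type*} [MetricSpace X] [Inhabited X]
    {A B : List X} {δ : ℝ} {i j : ℕ} {v : ℕ∞}
    (h : ∀ S : List X, S.Sublist (A.drop (i - 1)) → S ≠ [] →
      S.head? = (A.drop (i - 1)).head? → dFL S (B.drop (j - 1)) ≤ δ →
      v ≤ (S.length : ℕ∞)) : v ≤ OVal A B δ i j :=
  le_sInf (fun _ ⟨S, h1, h2, h3, h4, hz⟩ => hz ▸ h S h1 h2 h3 h4)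

lemma OVal_eq_top {X : Type*} [MetricSpace X] [Inhabited X]
    {A B : List X} {δ : ℝ} {i j : ℕ}
    (h : ∀ S : List X, S.Sublist (A.drop (i - 1)) → S ≠ [] →
      S.head? = (A.drop (i - 1)).head? → dFL S (B.drop (j - 1)) ≤ δ → False) :
    OVal A B δ i j = ⊤ :=
  sInf_eq_top.2 (fun _ ⟨S, h1, h2, h3, h4, _⟩ => absurd (h S h1 h2 h3 h4) not_false)

lemma OVal_witness {X : Type*} [MetricSpace X] [Inhabited X]
    {A B : List X} {δ : ℝ} {i j : ℕ} (h : OVal A B δ i j ≠ ⊤) :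
    ∃ S : List X, S.Sublist (A.drop (i - 1)) ∧ S ≠ [] ∧
      S.head? = (A.drop (i - 1)).head? ∧ dFL S (B.drop (j - 1)) ≤ δ ∧
      OVal A B δ i j = (S.length : ℕ∞) := by
  set s := {z : ℕ∞ | ∃ S : List X, S.Sublist (A.drop (i - 1)) ∧ S ≠ [] ∧
    S.head? = (A.drop (i - 1)).head? ∧ dFL S (B.drop (j - 1)) ≤ δ ∧
    z = (S.length : ℕ∞)} with hs
  have hOs : OVal A B δ i j = sInf s := rfl
  have hne : s.Nonempty := by
    by_contra hempty
    rw [Set.not_nonempty_iff_eq_empty] at hempty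
    exact h (by rw [hOs, hempty, sInf_empty])
  have hmem := enat_sInf_mem hne
  rw [← hOs] at hmem
  exact hmem

end DPaux

open DPaux

/-- Correctness of the dynamic program for minimum-length one-sided
simplification: (1) `O[i,j] = ⊤` when `d(a_i,b_j) > δ`; (2) for interior
`(i,j)` with `d(a_i,b_j) ≤ δ`, `O[i,j] = min(O[i,j+1], X[i+1,j+1] + 1)`;
(3) `X[i,j] = min(X[i+1,j], O[i,j])`. -/
theorem one_sided_dp_correct {X : Type*} [MetricSpace X] [Inhabited X]
    (A B : List X) (hA : A ≠ []) (hB : B ≠ []) (δ : ℝ) (hδ : 0 < δ) :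
    (∀ i j, 1 ≤ i → i ≤ A.length → 1 ≤ j → j ≤ B.length →
      δ < dist (A.getD (i - 1) default) (B.getD (j - 1) default) →
      OVal A B δ i j = ⊤) ∧
    (∀ i j, 1 ≤ i → i < A.length → 1 ≤ j → j < B.length →
      dist (A.getD (i - 1) default) (B.getD (j - 1) default) ≤ δ →
      OVal A B δ i j = min (OVal A B δ i (j + 1)) (XVal A B δ (i + 1) (j + 1) + 1)) ∧
    (∀ i j, 1 ≤ i → i ≤ A.length → 1 ≤ j → j ≤ B.length →
      XVal A B δ i j = min (XVal A B δ (i + 1) j) (OVal A B δ i j)) := by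
  refine ⟨?_, ?_, ?_⟩
  · -- Part 1
    intro i j hi1 him hj1 hjn hd
    apply OVal_eq_top
    intro S hsub hne hhead hdF
    have hBd : B.drop (j - 1) ≠ [] :=
      List.ne_nil_of_length_pos (by rw [List.length_drop]; omega)
    obtain ⟨c, hc, hcost⟩ := dFL_exists hne hBd
    have h00 : (0, 0) ∈ c := List.mem_of_mem_head? (Option.mem_def.2 hc.1)
    have hle : dist (S.getD 0 default) ((B.drop (j - 1)).getD 0 default)
        ≤ costL S (B.drop (j - 1)) c := dist_le_costL _ _ h00
    have e1 : S.getD 0 default = A.getD (i - 1) default := by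
      rw [getD_zero_eq hhead, getD_drop, Nat.add_zero]
    have e2 : (B.drop (j - 1)).getD 0 default = B.getD (j - 1) default := by
      rw [getD_drop, Nat.add_zero]
    rw [e1, e2, hcost] at hle
    exact absurd (le_trans hle hdF) (not_le.2 hd)
  · -- Part 2
    intro i j hi1 him hj1 hjn hd
    have hAd : i - 1 < A.length := by omega
    have hBne : B.drop (j - 1) ≠ [] :=
      List.ne_nil_of_length_pos (by rw [List.length_drop]; omega)
    have hBjne : B.drop j ≠ [] :=
      List.ne_nil_of_length_pos (by rw [List.length_drop]; omega)
    have hdropB : (B.drop (j - 1)).drop 1 = B.drop j := by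
      rw [List.drop_drop]; congr 1; omega
    have hAsplit : A.drop (i - 1) = A.getD (i - 1) default :: A.drop i := by
      have h1 : i - 1 + 1 = i := by omega
      rw [List.drop_eq_getElem_cons hAd, List.getD_eq_getElem _ _ hAd, h1]
    refine le_antisymm (le_min ?_ ?_) (le_OVal ?_)
    · -- OVal i j ≤ OVal i (j+1)
      apply le_OVal
      intro S hsub hne hhead hdF
      rw [Nat.add_sub_cancel] at hdF
      refine OVal_le hsub hne hhead ?_
      obtain ⟨c, hc, hcost⟩ := dFL_exists hne hBjne
      obtain ⟨c2, hc2, hcost2⟩ := coupling_prepend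
        (P := S) (P' := S) (Q := B.drop j) (Q' := B.drop (j - 1))
        (la := S.length) (lb := (B.drop j).length)
        (la' := S.length) (lb' := (B.drop (j - 1)).length) 0 1 hc
        ⟨by omega, by omega, by omega, by omega, by decide⟩
        (by omega)
        (by rw [List.length_drop, List.length_drop]; omega)
        (fun x => by rw [Nat.add_zero])
        (fun x => by rw [getD_drop, getD_drop]; congr 1; omega)
      refine le_trans (dFL_le_costL hc2) ?_
      rw [hcost2, hcost]
      apply max_le ?_ hdF
      have e1 : S.getD 0 default = A.getD (i - 1) default := by
        rw [getD_zero_eq hhead, getD_drop, Nat.add_zero]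
      have e2 : (B.drop (j - 1)).getD 0 default = B.getD (j - 1) default := by
        rw [getD_drop, Nat.add_zero]
      rw [e1, e2]
      exact hd
    · -- OVal i j ≤ XVal (i+1) (j+1) + 1
      by_cases hX : XVal A B δ (i + 1) (j + 1) = ⊤
      · rw [hX]
        exact le_top
      · obtain ⟨i0, hi0mem, hi0⟩ := Finset.exists_mem_eq_inf (Finset.Icc (i + 1) A.length)
          ⟨i + 1, Finset.mem_Icc.2 ⟨le_rfl, by omega⟩⟩ (fun i' => OVal A B δ i' (j + 1))
        have hXeq : XVal A B δ (i + 1) (j + 1) = OVal A B δ i0 (j + 1) := hi0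
        rw [hXeq] at hX ⊢
        obtain ⟨S', hsub', hS'ne, hhead', hdF', heq⟩ := OVal_witness hX
        rw [Nat.add_sub_cancel] at hdF'
        rw [Finset.mem_Icc] at hi0mem
        have hsubA : S'.Sublist (A.drop i) := by
          refine hsub'.trans ?_
          have hdd : A.drop (i0 - 1) = (A.drop i).drop (i0 - 1 - i) := by
            rw [List.drop_drop]; congr 1; omega
          rw [hdd]
          exact List.drop_sublist _ _
        set a := A.getD (i - 1) default with ha
        have hSsub : (a :: S').Sublist (A.drop (i - 1)) := by
          rw [hAsplit]
          exact hsubA.cons₂ a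
        obtain ⟨c, hc, hcost⟩ := dFL_exists hS'ne hBjne
        obtain ⟨c2, hc2, hcost2⟩ := coupling_prepend
          (P := S') (P' := a :: S') (Q := B.drop j) (Q' := B.drop (j - 1))
          (la := S'.length) (lb := (B.drop j).length)
          (la' := (a :: S').length) (lb' := (B.drop (j - 1)).length) 1 1 hc
          ⟨by omega, by omega, by omega, by omega, by decide⟩
          (by rw [List.length_cons]; have := List.length_pos_iff.2 hS'ne; omega)
          (by rw [List.length_drop, List.length_drop]; omega)
          (fun x => List.getD_cons_succ)
          (fun x => by rw [getD_drop, getD_drop]; congr 1; omega)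
        have hdFS : dFL (a :: S') (B.drop (j - 1)) ≤ δ := by
          refine le_trans (dFL_le_costL hc2) ?_
          rw [hcost2, hcost]
          apply max_le ?_ hdF'
          have e2 : (B.drop (j - 1)).getD 0 default = B.getD (j - 1) default := by
            rw [getD_drop, Nat.add_zero]
          rw [List.getD_cons_zero, e2]
          exact hd
        refine le_trans (OVal_le hSsub (by simp) ?_ hdFS) ?_
        · rw [hAsplit]; rfl
        · rw [heq, List.length_cons]
          have h : (S'.length + 1 : ℕ) = S'.length + 1 := rfl
          push_cast
          exact le_refl _
    · -- min ≤ OVal i j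
      intro S hsub hne hhead hdF
      obtain ⟨c, hc, hcost⟩ := dFL_exists hne hBne
      have hcd : costL S (B.drop (j - 1)) c ≤ δ := le_trans (le_of_eq hcost) hdF
      have hlb2 : 2 ≤ (B.drop (j - 1)).length := by rw [List.length_drop]; omega
      have hla1 : 1 ≤ S.length := List.length_pos_iff.2 hne
      obtain ⟨k, c', hk, hcoup', hcost'⟩ := peel (B.drop (j - 1)) (B.drop (j - 1)).length δ
        c.length c le_rfl S S.length hc hlb2 hla1 hcd
      rw [hdropB] at hcost'
      have hlen1 : (S.drop k).length = S.length - k := List.length_drop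
      have hlen2 : (B.drop j).length = (B.drop (j - 1)).length - 1 := by
        rw [List.length_drop, List.length_drop]; omega
      have hdFk : dFL (S.drop k) (B.drop j) ≤ δ := by
        refine le_trans (dFL_le_costL ?_) hcost'
        rw [hlen1, hlen2]
        exact hcoup'
      rcases Nat.eq_zero_or_pos k with rfl | hkpos
      · refine le_trans (min_le_left _ _) (OVal_le hsub hne hhead ?_)
        rw [Nat.add_sub_cancel]
        simpa using hdFk
      · have hTne : S.drop k ≠ [] := List.ne_nil_of_length_pos (by rw [hlen1]; omega)
        have hTsub : (S.drop k).Sublist (A.drop i) := by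
          have h2 : S.tail.Sublist (A.drop i) := by
            have h2' := hsub.tail
            rwa [List.tail_drop, show i - 1 + 1 = i from by omega] at h2'
          have h1 : S.drop k = S.tail.drop (k - 1) := by
            rw [← List.drop_one, List.drop_drop]
            congr 1
            omega
          rw [h1]
          exact (List.drop_sublist _ _).trans h2
        obtain ⟨p, hp, hTsub2, hThead⟩ := sublist_exists_drop hTsub hTne
        have hdd : (A.drop i).drop p = A.drop (i + p) := by rw [List.drop_drop]
        rw [hdd] at hTsub2 hThead
        have hOle : OVal A B δ (i + p + 1) (j + 1) ≤ ((S.drop k).length : ℕ∞) := by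
          refine OVal_le ?_ hTne ?_ ?_
          · rw [show i + p + 1 - 1 = i + p from by omega]; exact hTsub2
          · rw [show i + p + 1 - 1 = i + p from by omega]; exact hThead
          · rw [Nat.add_sub_cancel]; exact hdFk
        have hmemI : i + p + 1 ∈ Finset.Icc (i + 1) A.length := by
          rw [Finset.mem_Icc]
          rw [List.length_drop] at hp
          omega
        have hXle : XVal A B δ (i + 1) (j + 1) ≤ ((S.drop k).length : ℕ∞) :=
          le_trans (Finset.inf_le hmemI) hOle
        refine le_trans (min_le_right _ _) ?_
        calc XVal A B δ (i + 1) (j + 1) + 1 ≤ ((S.drop k).length : ℕ∞) + 1 :=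
              add_le_add_left hXle 1
          _ ≤ (S.length : ℕ∞) := by
              rw [hlen1]
              have h : S.length - k + 1 ≤ S.length := by omega
              exact_mod_cast h
  · -- Part 3
    intro i j hi1 him hj1 hjn
    have hIcc : Finset.Icc i A.length = insert i (Finset.Icc (i + 1) A.length) := by
      ext x
      simp only [Finset.mem_Icc, Finset.mem_insert]
      omega
    show (Finset.Icc i A.length).inf (fun i' => OVal A B δ i' j) = _
    rw [hIcc, Finset.inf_insert]
    exact min_comm _ _
end
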